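/- Let W > 0 and define v̄(β) = (1/(2W))·log₂(β/(2(ln 2)W)) − 1/(2(ln 2)W) + 1/β for β > 2(ln 2)W. Then v̄ is strictly increasing on the interval (2(ln 2)W, ∞) and v̄(β) > 0 for every β > 2(ln 2)W. -/

import Mathlib

section Aux

variable (c : ℝ)

noncomputable def fAux (β : ℝ) : ℝ := (Real.log β - Real.log c) / c - 1 / c + β⁻¹

lemma fAux_hasDerivAt (hc : 0 < c) {β : ℝ} (hβ : 0 < β) :
    HasDerivAt (fAux c) (β⁻¹ / c - (β ^ 2)⁻¹) β := by
  have h1 : HasDerivAt (fun β : ℝ => (Real.log β - Real.log c) / c - 1 / c)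
      (β⁻¹ / c) β := by
    simpa using (((Real.hasDerivAt_log hβ.ne').sub_const (Real.log c)).div_const c).sub_const
      (1 / c)
  have h2 : HasDerivAt (fun β : ℝ => β⁻¹) (-(β ^ 2)⁻¹) β := hasDerivAt_inv hβ.ne'
  have : fAux c = fun β => ((Real.log β - Real.log c) / c - 1 / c) + β⁻¹ := rfl
  rw [this]
  exact (h1.add h2).congr_deriv (by ring)

lemma fAux_strictMonoOn (hc : 0 < c) : StrictMonoOn (fAux c) (Set.Ici c) := by
  apply strictMonoOn_of_deriv_pos (convex_Ici c)
  · intro x hx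
    exact (fAux_hasDerivAt c hc (lt_of_lt_of_le hc hx)).continuousAt.continuousWithinAt
  · intro x hx
    rw [interior_Ici] at hx
    have hxpos : 0 < x := hc.trans hx
    rw [(fAux_hasDerivAt c hc hxpos).deriv]
    have h1 : (x:ℝ)⁻¹ < c⁻¹ := by exact inv_strictAnti₀ hc hx
    have : (x ^ 2)⁻¹ < x⁻¹ / c := by
      rw [div_eq_mul_inv, sq, mul_inv]
      exact mul_lt_mul_of_pos_left h1 (inv_pos.mpr hxpos)
    linarith

lemma fAux_pos (hc : 0 < c) {β : ℝ} (hβ : c < β) : 0 < fAux c β := by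
  have := fAux_strictMonoOn c hc (Set.mem_Ici.mpr le_rfl) (Set.mem_Ici.mpr hβ.le) hβ
  simpa [fAux, sub_self, hc.ne'] using this

end Aux

/-- Monotonicity and positivity claim of equation (26) in Appendix B:
`v̄(β) = (1/(2W))·log₂(β/(2 ln 2 · W)) − 1/(2 ln 2 · W) + 1/β` is strictly
increasing and positive on `(2 ln 2 · W, ∞)`. -/
theorem vbar_strictMono_and_pos (W : ℝ) (hW : 0 < W) :
    let vbar : ℝ → ℝ := fun β =>
      (1 / (2 * W)) * Real.logb 2 (β / (2 * Real.log 2 * W))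
        - 1 / (2 * Real.log 2 * W) + 1 / β
    StrictMonoOn vbar (Set.Ioi (2 * Real.log 2 * W)) ∧
    (∀ β : ℝ, 2 * Real.log 2 * W < β → 0 < vbar β) := by
  intro vbar
  set c : ℝ := 2 * Real.log 2 * W with hc_def
  have hlog2 : 0 < Real.log 2 := Real.log_pos one_lt_two
  have hc : 0 < c := by positivity
  have heq : ∀ β : ℝ, c < β → vbar β = fAux c β := by
    intro β hβ
    have hβpos : 0 < β := hc.trans hβ
    simp only [vbar, fAux, Real.logb, Real.log_div hβpos.ne' hc.ne']
    rw [hc_def]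
    rw [Real.log_div hβpos.ne' (by positivity)]
    field_simp
  constructor
  · intro a ha b hb hab
    rw [heq a ha, heq b hb]
    exact fAux_strictMonoOn c hc (Set.mem_Ici.mpr (le_of_lt (Set.mem_Ioi.mp ha)))
      (Set.mem_Ici.mpr (le_of_lt (Set.mem_Ioi.mp hb))) hab
  · intro β hβ
    rw [heq β hβ]
    exact fAux_pos c hc hβ
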